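/- Consider the feasible set S = {(y₁, y₂, y₃) ∈ ℝ³ : 0 ≤ y i ≤ 1 for all i, y₁ + y₃ ≤ 1, y₂ + y₃ ≤ 1} with objectives F i(y) = y i to be maximized. The point (1, 1, 0) minimizes γ(y) = √(∑ i (1 − y i)²)/√(∑ i y i²) over S \ {0}, and (1, 1, 0) is Pareto-optimal for (F₁, F₂, F₃) on S. -/

import Mathlib

theorem stmt8 (S : Set (Fin 3 → ℝ))
    (hS : S = {y | (∀ i, 0 ≤ y i ∧ y i ≤ 1) ∧ y 0 + y 2 ≤ 1 ∧ y 1 + y 2 ≤ 1}) :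
    ((![1, 1, 0] : Fin 3 → ℝ) ∈ S) ∧
    (∀ y ∈ S, y ≠ 0 →
      Real.sqrt (∑ i, (1 - (![1, 1, 0] : Fin 3 → ℝ) i) ^ 2) /
        Real.sqrt (∑ i, ((![1, 1, 0] : Fin 3 → ℝ) i) ^ 2) ≤
      Real.sqrt (∑ i, (1 - y i) ^ 2) / Real.sqrt (∑ i, (y i) ^ 2)) ∧
    (¬ ∃ y ∈ S, (∀ i, (![1, 1, 0] : Fin 3 → ℝ) i ≤ y i) ∧
      (∃ j, (![1, 1, 0] : Fin 3 → ℝ) j < y j)) := by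
  subst hS
  refine ⟨?_, ?_, ?_⟩
  · refine ⟨fun i => ?_, by norm_num [Matrix.cons_val_two], by norm_num [Matrix.cons_val_two]⟩
    fin_cases i <;> norm_num
  · rintro y ⟨hb, h1, h2⟩ hy0
    have hb0 := hb 0; have hb1 := hb 1; have hb2 := hb 2
    obtain ⟨i, hi⟩ := Function.ne_iff.mp hy0
    have hpi : 0 < (y i) ^ 2 := lt_of_le_of_ne (sq_nonneg _) (Ne.symm (pow_ne_zero 2 hi))
    have hD : 0 < ∑ j, (y j) ^ 2 :=
      Finset.sum_pos' (fun j _ => sq_nonneg _) ⟨i, Finset.mem_univ i, hpi⟩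
    have hL1 : (∑ i, (1 - (![1,1,0] : Fin 3 → ℝ) i) ^ 2) = 1 := by
      simp [Fin.sum_univ_three]
    have hL2 : (∑ i, ((![1,1,0] : Fin 3 → ℝ) i) ^ 2) = 2 := by
      norm_num [Fin.sum_univ_three, Matrix.cons_val_two]
    rw [hL1, hL2, Real.sqrt_one]
    have key : ∑ j, (y j) ^ 2 ≤ 2 * ∑ j, (1 - y j) ^ 2 := by
      rw [Fin.sum_univ_three, Fin.sum_univ_three]
      nlinarith [sq_nonneg (y 2),
        mul_nonneg (by linarith : (0:ℝ) ≤ 1 - (y 0 + y 2))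
          (by linarith : (0:ℝ) ≤ 3 + y 2 - y 0),
        mul_nonneg (by linarith : (0:ℝ) ≤ 1 - (y 1 + y 2))
          (by linarith : (0:ℝ) ≤ 3 + y 2 - y 1)]
    rw [div_le_div_iff₀ (by positivity) (Real.sqrt_pos.mpr hD)]
    have hs : Real.sqrt (∑ j, (y j) ^ 2) ≤
        Real.sqrt (∑ j, (1 - y j) ^ 2) * Real.sqrt 2 := by
      rw [← Real.sqrt_mul (by positivity)]
      exact Real.sqrt_le_sqrt (by linarith)
    linarith
  · rintro ⟨y, ⟨hb, h1, h2⟩, hall, j, hj⟩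
    have hb0 := hb 0; have hb1 := hb 1; have hb2 := hb 2
    have ha0 := hall 0
    simp at ha0
    fin_cases j <;> simp at hj <;> linarith
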